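/- Assume X_1,…,X_n are i.i.d. Bernoulli(p) and Y_k = X_k ⊕ V_k for k = 1,…,n, where V_1,…,V_n are i.i.d. Bernoulli(α) independent of X^n, with p ∈ [1/2, 1), α ∈ [0, 1/2), and 1−α > p. Then there exists ε_L < (1−α)^n such that for every ε ∈ [ε_L, (1−α)^n]: sup{P_c(Y^n|Z^n) : P_{Z^n|Y^n} a channel with output alphabet {0,1}^n, X^n–Y^n–Z^n a Markov chain, and P_c(X^n|Z^n) ≤ ε} = 1 − ζ(ε)·q^n, where q := α(1−p) + (1−α)p and ζ(ε) := ((1−α)^n − ε)/(((1−α)p)^n − (α(1−p))^n). Moreover, the supremum is attained by the 2^n-ary Z-channel that maps every y^n ≠ (1,…,1) to itself with probability 1 and maps (1,…,1) to (0,…,0) with probability ζ(ε) and to (1,…,1) with probability 1 − ζ(ε). -/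

import Mathlib

open Finset

/-- `bern p b = p` if `b = true`, and `1 - p` otherwise. -/
noncomputable def bern (p : ℝ) (b : Bool) : ℝ := if b then p else 1 - p

/-- Joint pmf of `(X^n, Y^n)` where `X_1,…,X_n` are i.i.d. `Bernoulli(p)` and
`Y_k = X_k ⊕ V_k` with `V_1,…,V_n` i.i.d. `Bernoulli(α)` independent of `X^n`. -/
noncomputable def jointIID (n : ℕ) (p α : ℝ) :
    (Fin n → Bool) → (Fin n → Bool) → ℝ :=
  fun x y => ∏ k, bern p (x k) * bern α (xor (x k) (y k))

/-- `F` is a channel (row-stochastic matrix) on a finite alphabet. -/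
def IsChannel {V : Type*} [Fintype V] (F : V → V → ℝ) : Prop :=
  (∀ y z, 0 ≤ F y z) ∧ ∀ y, ∑ z, F y z = 1

/-- `P_c(X|Z)` where `Z` is the output of the channel `F` applied to `Y` and
`X – Y – Z` is a Markov chain, for joint pmf `P` of `(X,Y)`. -/
noncomputable def pcXZ {X V : Type*} [Fintype X] [Fintype V] [Nonempty X]
    (P : X → V → ℝ) (F : V → V → ℝ) : ℝ :=
  ∑ z, ⨆ x, ∑ y, P x y * F y z

/-- `P_c(Y|Z)` where `Z` is the output of the channel `F` applied to `Y`. -/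
noncomputable def pcYZ {X V : Type*} [Fintype X] [Fintype V] [Nonempty V]
    (P : X → V → ℝ) (F : V → V → ℝ) : ℝ :=
  ∑ z, ⨆ y, (∑ x, P x y) * F y z

/-- The Z-channel from `y0` to `z0` with crossover probability `ζ`: every `y ≠ y0` is
mapped to itself with probability `1`, while `y0` is mapped to `z0` with probability
`ζ` and to itself with probability `1 − ζ`. -/
noncomputable def Zch {V : Type*} [DecidableEq V] (y0 z0 : V) (ζ : ℝ) : V → V → ℝ :=
  fun y z =>
    if y = y0 then (if z = z0 then ζ else if z = y0 then 1 - ζ else 0)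
    else (if z = y then 1 else 0)

lemma ciSup_eq_max {ι : Type*} [Finite ι] [Nonempty ι] (h : ι → ℝ) (i0 : ι)
    (H : ∀ i, h i ≤ h i0) : (⨆ i, h i) = h i0 :=
  le_antisymm (ciSup_le H) (le_ciSup (Finite.bddAbove_range h) i0)

lemma sum_pi_prod {n : ℕ} (h : Fin n → Bool → ℝ) :
    ∑ x : Fin n → Bool, ∏ k, h k (x k) = ∏ k, (h k true + h k false) := by
  calc ∑ x : Fin n → Bool, ∏ k, h k (x k)
      = ∑ x ∈ Fintype.piFinset (fun _ : Fin n => (univ : Finset Bool)), ∏ k, h k (x k) := by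
        rw [Fintype.piFinset_univ]
    _ = ∏ k, ∑ b, h k b := (Finset.prod_univ_sum _ _).symm
    _ = ∏ k, (h k true + h k false) := Finset.prod_congr rfl fun k _ => by simp

namespace IIDAux
noncomputable def fB (p α : ℝ) (x y : Bool) : ℝ := bern p x * bern α (xor x y)
noncomputable def gB (p α : ℝ) (y : Bool) : ℝ :=
  if y then α * (1 - p) + (1 - α) * p else p * α + (1 - p) * (1 - α)
noncomputable def mxB (p α : ℝ) (y : Bool) : ℝ :=
  if y then (1 - α) * p else (1 - p) * (1 - α)

lemma jointIID_eq (n : ℕ) (p α : ℝ) (x y : Fin n → Bool) :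
    jointIID n p α x y = ∏ k, fB p α (x k) (y k) := rfl

structure Hs (p α : ℝ) : Prop where
  hp1 : 1/2 ≤ p
  hp2 : p < 1
  ha1 : 0 ≤ α
  ha2 : α < 1/2
  hpa : p < 1 - α

variable {p α : ℝ}

lemma fB_nonneg (h : Hs p α) (x y : Bool) : 0 ≤ fB p α x y := by
  have := h.hp1; have := h.hp2; have := h.ha1; have := h.ha2
  cases x <;> cases y <;> simp [fB, bern] <;> nlinarith

lemma gB_nonneg (h : Hs p α) (y : Bool) : 0 ≤ gB p α y := by
  have := h.hp1; have := h.hp2; have := h.ha1; have := h.ha2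
  cases y <;> (simp [gB]; nlinarith)

lemma mxB_nonneg (h : Hs p α) (y : Bool) : 0 ≤ mxB p α y := by
  have := h.hp1; have := h.hp2; have := h.ha1; have := h.ha2
  cases y <;> (simp [mxB]; nlinarith)

lemma fB_le_diag (h : Hs p α) (x y : Bool) : fB p α x y ≤ fB p α y y := by
  have := h.hp1; have := h.hp2; have := h.ha1; have := h.ha2; have := h.hpa
  cases x <;> cases y <;> simp [fB, bern] <;> nlinarith

lemma fB_diag (p α : ℝ) (y : Bool) : fB p α y y = mxB p α y := by
  cases y <;> simp [fB, bern, mxB] <;> ring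

lemma fB_sum (p α : ℝ) (y : Bool) : fB p α true y + fB p α false y = gB p α y := by
  cases y <;> simp [fB, bern, gB] <;> ring

lemma joint_nonneg (h : Hs p α) {n : ℕ} (x y : Fin n → Bool) :
    0 ≤ jointIID n p α x y :=
  (jointIID_eq n p α x y) ▸ Finset.prod_nonneg fun k _ => fB_nonneg h _ _

/-- marginal of Y -/
lemma marg (n : ℕ) (p α : ℝ) (y : Fin n → Bool) :
    ∑ x : Fin n → Bool, jointIID n p α x y = ∏ k, gB p α (y k) := by
  simp only [jointIID_eq]
  rw [sum_pi_prod (fun k b => fB p α b (y k))]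
  exact Finset.prod_congr rfl fun k _ => fB_sum p α (y k)

/-- sup over x of the joint -/
lemma sup_joint (h : Hs p α) (n : ℕ) (y : Fin n → Bool) :
    (⨆ x : Fin n → Bool, jointIID n p α x y) = ∏ k, mxB p α (y k) := by
  have := ciSup_eq_max (fun x : Fin n → Bool => jointIID n p α x y) y
    (fun x => by
      simp only [jointIID_eq]
      exact Finset.prod_le_prod (fun k _ => fB_nonneg h _ _) (fun k _ => fB_le_diag h _ _))
  rw [show (⨆ x : Fin n → Bool, jointIID n p α x y) = jointIID n p α y y from this,
    jointIID_eq]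
  exact Finset.prod_congr rfl fun k _ => fB_diag p α (y k)

lemma sum_G (h : Hs p α) (n : ℕ) : ∑ y : Fin n → Bool, ∏ k, gB p α (y k) = 1 := by
  rw [sum_pi_prod (fun k b => gB p α b)]
  have : ∀ k : Fin n, gB p α true + gB p α false = 1 := fun k => by simp [gB]; ring
  rw [Finset.prod_congr rfl fun k _ => this k, Finset.prod_const_one]

lemma sum_mx (n : ℕ) : ∑ y : Fin n → Bool, ∏ k, mxB p α (y k) = (1 - α) ^ n := by
  rw [sum_pi_prod (fun k b => mxB p α b)]
  have : ∀ k : Fin n, mxB p α true + mxB p α false = 1 - α := fun k => by simp [mxB]; ring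
  rw [Finset.prod_congr rfl fun k _ => this k, Finset.prod_const, Finset.card_univ,
    Fintype.card_fin]

lemma Q_nonneg (h : Hs p α) : 0 ≤ α * (1 - p) + (1 - α) * p := by
  have := h.hp1; have := h.hp2; have := h.ha1; have := h.ha2; nlinarith

lemma coord1 (h : Hs p α) (b : Bool) :
    (α * (1 - p) + (1 - α) * p) * mxB p α b ≤ ((1 - α) * p) * gB p α b := by
  have := h.hp1; have := h.hp2; have := h.ha1; have := h.ha2; have := h.hpa
  have key : 0 ≤ α * (1 - α) * (2 * p - 1) :=
    mul_nonneg (mul_nonneg (by linarith) (by linarith)) (by linarith)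
  cases b <;> (simp [mxB, gB]; nlinarith [key])

lemma coord2 (h : Hs p α) (b b' : Bool) :
    (α * (1 - p)) * gB p α b ≤ (α * (1 - p) + (1 - α) * p) * fB p α b' b := by
  have := h.hp1; have := h.hp2; have := h.ha1; have := h.ha2; have := h.hpa
  have key1 : 0 ≤ α * (1 - α) * (2 * p - 1) :=
    mul_nonneg (mul_nonneg (by linarith) (by linarith)) (by linarith)
  have key2 : 0 ≤ p * (1 - p) * (1 - 2 * α) :=
    mul_nonneg (mul_nonneg (by linarith) (by linarith)) (by linarith)
  have key3 : 0 ≤ (α * (1 - p) + (1 - α) * p) * (p - α) :=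
    mul_nonneg (by nlinarith [mul_nonneg (mul_nonneg (le_of_lt (show (0:ℝ) < 1 - p by linarith)) (show (0:ℝ) ≤ α by linarith)) (le_refl (0:ℝ))]) (by linarith)
  cases b <;> cases b' <;> simp [fB, bern, gB] <;> nlinarith [key1, key2, key3]

/-- the key coefficientwise converse inequality (★★) -/
lemma starstar (h : Hs p α) (n : ℕ) (ystar y : Fin n → Bool) :
    (α * (1 - p) + (1 - α) * p) ^ n *
        (∏ k, mxB p α (y k) - ∏ k, fB p α (ystar k) (y k)) ≤
    (((1 - α) * p) ^ n - (α * (1 - p)) ^ n) * ∏ k, gB p α (y k) := by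
  have h1 : (α * (1 - p) + (1 - α) * p) ^ n * ∏ k, mxB p α (y k) ≤
      ((1 - α) * p) ^ n * ∏ k, gB p α (y k) := by
    calc (α * (1 - p) + (1 - α) * p) ^ n * ∏ k, mxB p α (y k)
        = ∏ k : Fin n, (α * (1 - p) + (1 - α) * p) * mxB p α (y k) := by
          rw [Finset.prod_mul_distrib, Finset.prod_const, Finset.card_univ, Fintype.card_fin]
      _ ≤ ∏ k : Fin n, ((1 - α) * p) * gB p α (y k) :=
          Finset.prod_le_prod
            (fun k _ => mul_nonneg (Q_nonneg h) (mxB_nonneg h _))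
            (fun k _ => coord1 h (y k))
      _ = ((1 - α) * p) ^ n * ∏ k, gB p α (y k) := by
          rw [Finset.prod_mul_distrib, Finset.prod_const, Finset.card_univ, Fintype.card_fin]
  have h2 : (α * (1 - p)) ^ n * ∏ k, gB p α (y k) ≤
      (α * (1 - p) + (1 - α) * p) ^ n * ∏ k, fB p α (ystar k) (y k) := by
    calc (α * (1 - p)) ^ n * ∏ k, gB p α (y k)
        = ∏ k : Fin n, (α * (1 - p)) * gB p α (y k) := by
          rw [Finset.prod_mul_distrib, Finset.prod_const, Finset.card_univ, Fintype.card_fin]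
      _ ≤ ∏ k : Fin n, (α * (1 - p) + (1 - α) * p) * fB p α (ystar k) (y k) :=
          Finset.prod_le_prod
            (fun k _ => mul_nonneg (by have := h.hp2; have := h.ha1; nlinarith) (gB_nonneg h _))
            (fun k _ => coord2 h (y k) (ystar k))
      _ = (α * (1 - p) + (1 - α) * p) ^ n * ∏ k, fB p α (ystar k) (y k) := by
          rw [Finset.prod_mul_distrib, Finset.prod_const, Finset.card_univ, Fintype.card_fin]
  nlinarith [h1, h2]

/-- per-z converse inequality -/
lemma converse_per_z (h : Hs p α) (n : ℕ) (w : (Fin n → Bool) → ℝ) (hw : ∀ y, 0 ≤ w y) :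
    (α * (1 - p) + (1 - α) * p) ^ n *
        ((∑ y : Fin n → Bool, (∏ k, mxB p α (y k)) * w y) -
          ⨆ x : Fin n → Bool, ∑ y, jointIID n p α x y * w y) ≤
      (((1 - α) * p) ^ n - (α * (1 - p)) ^ n) *
        ((∑ y : Fin n → Bool, (∏ k, gB p α (y k)) * w y) -
          ⨆ y : Fin n → Bool, (∏ k, gB p α (y k)) * w y) := by
  obtain ⟨ystar, hystar⟩ := Finite.exists_max (fun y : Fin n → Bool => (∏ k, gB p α (y k)) * w y)
  have hsup : (⨆ y : Fin n → Bool, (∏ k, gB p α (y k)) * w y) =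
      (∏ k, gB p α (ystar k)) * w ystar := ciSup_eq_max _ ystar hystar
  have hsupx : ∑ y : Fin n → Bool, jointIID n p α ystar y * w y ≤
      ⨆ x : Fin n → Bool, ∑ y, jointIID n p α x y * w y :=
    le_ciSup (f := fun x : Fin n → Bool => ∑ y, jointIID n p α x y * w y)
      (Finite.bddAbove_range _) ystar
  set Qn := (α * (1 - p) + (1 - α) * p) ^ n with hQn
  set Δ := ((1 - α) * p) ^ n - (α * (1 - p)) ^ n with hΔ
  set t : (Fin n → Bool) → ℝ :=
    fun y => Qn * (∏ k, mxB p α (y k) - ∏ k, fB p α (ystar k) (y k)) * w y with ht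
  set s : (Fin n → Bool) → ℝ := fun y => Δ * ((∏ k, gB p α (y k)) * w y) with hs
  have key : ∀ y, t y ≤ s y := fun y => by
    simp only [ht, hs]
    rw [← mul_assoc]
    exact mul_le_mul_of_nonneg_right (starstar h n ystar y) (hw y)
  have hts : t ystar = 0 := by
    have : ∏ k, fB p α (ystar k) (ystar k) = ∏ k, mxB p α (ystar k) :=
      Finset.prod_congr rfl fun k _ => fB_diag p α (ystar k)
    simp [ht, this]
  have e1 : ∑ y : Fin n → Bool, t y ≤ (∑ y : Fin n → Bool, s y) - s ystar := by
    have a1 : ∑ y : Fin n → Bool, t y = ∑ y ∈ univ.erase ystar, t y := by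
      rw [← Finset.add_sum_erase _ t (mem_univ ystar), hts, zero_add]
    have a2 : ∑ y ∈ univ.erase ystar, t y ≤ ∑ y ∈ univ.erase ystar, s y :=
      Finset.sum_le_sum fun y _ => key y
    have a3 : ∑ y : Fin n → Bool, s y = s ystar + ∑ y ∈ univ.erase ystar, s y :=
      (Finset.add_sum_erase _ s (mem_univ ystar)).symm
    linarith
  have e4 : ∑ y : Fin n → Bool, t y =
      Qn * ((∑ y : Fin n → Bool, (∏ k, mxB p α (y k)) * w y) -
        ∑ y : Fin n → Bool, jointIID n p α ystar y * w y) := by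
    rw [mul_sub, mul_sum, mul_sum]
    rw [← Finset.sum_sub_distrib]
    refine Finset.sum_congr rfl fun y _ => ?_
    rw [jointIID_eq]; simp only [ht]; ring
  have e5 : ∑ y : Fin n → Bool, s y =
      Δ * ∑ y : Fin n → Bool, (∏ k, gB p α (y k)) * w y := by
    rw [mul_sum]
  have e6 : s ystar = Δ * ⨆ y : Fin n → Bool, (∏ k, gB p α (y k)) * w y := by
    rw [hsup]
  have hQnn : (0:ℝ) ≤ Qn := pow_nonneg (Q_nonneg h) n
  have e7 : Qn * ((∑ y : Fin n → Bool, (∏ k, mxB p α (y k)) * w y) -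
        ⨆ x : Fin n → Bool, ∑ y, jointIID n p α x y * w y) ≤
      Qn * ((∑ y : Fin n → Bool, (∏ k, mxB p α (y k)) * w y) -
        ∑ y : Fin n → Bool, jointIID n p α ystar y * w y) :=
    mul_le_mul_of_nonneg_left (by linarith) hQnn
  have e8 := mul_sub Δ (∑ y : Fin n → Bool, (∏ k, gB p α (y k)) * w y)
    (⨆ y : Fin n → Bool, (∏ k, gB p α (y k)) * w y)
  linarith [e1, e4, e5, e6, e7, e8]


-- ---------- global quantities ----------

lemma gB_le_tt (h : Hs p α) (b : Bool) : gB p α b ≤ gB p α true := by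
  have := h.hp1; have := h.hp2; have := h.ha1; have := h.ha2
  cases b <;> simp [gB] <;> nlinarith

lemma G_le_ones (h : Hs p α) {n : ℕ} (y : Fin n → Bool) :
    ∏ k, gB p α (y k) ≤ (α * (1 - p) + (1 - α) * p) ^ n := by
  have : ∏ k : Fin n, gB p α (y k) ≤ ∏ k : Fin n, gB p α true :=
    Finset.prod_le_prod (fun k _ => gB_nonneg h _) (fun k _ => gB_le_tt h _)
  simpa [gB] using this

lemma G_nonneg (h : Hs p α) {n : ℕ} (y : Fin n → Bool) : 0 ≤ ∏ k, gB p α (y k) :=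
  Finset.prod_nonneg fun k _ => gB_nonneg h _

-- ---------- global converse ----------

lemma pcYZ_rw {n : ℕ} (F : (Fin n → Bool) → (Fin n → Bool) → ℝ) :
    pcYZ (jointIID n p α) F = ∑ z, ⨆ y, (∏ k, gB p α (y k)) * F y z := by
  simp only [pcYZ, marg]

lemma sum_GF (h : Hs p α) {n : ℕ} (F : (Fin n → Bool) → (Fin n → Bool) → ℝ)
    (hF : IsChannel F) :
    ∑ z : Fin n → Bool, ∑ y : Fin n → Bool, (∏ k, gB p α (y k)) * F y z = 1 := by
  rw [Finset.sum_comm]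
  have : ∀ y : Fin n → Bool,
      ∑ z : Fin n → Bool, (∏ k, gB p α (y k)) * F y z = ∏ k, gB p α (y k) := fun y => by
    rw [← Finset.mul_sum, hF.2 y, mul_one]
  rw [Finset.sum_congr rfl fun y _ => this y, sum_G h n]

lemma sum_mxF (h : Hs p α) {n : ℕ} (F : (Fin n → Bool) → (Fin n → Bool) → ℝ)
    (hF : IsChannel F) :
    ∑ z : Fin n → Bool, ∑ y : Fin n → Bool, (∏ k, mxB p α (y k)) * F y z = (1 - α) ^ n := by
  rw [Finset.sum_comm]
  have : ∀ y : Fin n → Bool,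
      ∑ z : Fin n → Bool, (∏ k, mxB p α (y k)) * F y z = ∏ k, mxB p α (y k) := fun y => by
    rw [← Finset.mul_sum, hF.2 y, mul_one]
  rw [Finset.sum_congr rfl fun y _ => this y, sum_mx n]

/-- global converse -/
lemma global_converse (h : Hs p α) (n : ℕ) (F : (Fin n → Bool) → (Fin n → Bool) → ℝ)
    (hF : IsChannel F) :
    (α * (1 - p) + (1 - α) * p) ^ n * ((1 - α) ^ n - pcXZ (jointIID n p α) F) ≤
      (((1 - α) * p) ^ n - (α * (1 - p)) ^ n) * (1 - pcYZ (jointIID n p α) F) := by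
  have e1 : (1 - α) ^ n - pcXZ (jointIID n p α) F =
      ∑ z : Fin n → Bool, ((∑ y : Fin n → Bool, (∏ k, mxB p α (y k)) * F y z) -
        ⨆ x : Fin n → Bool, ∑ y, jointIID n p α x y * F y z) := by
    rw [Finset.sum_sub_distrib, sum_mxF h F hF]; rfl
  have e2 : 1 - pcYZ (jointIID n p α) F =
      ∑ z : Fin n → Bool, ((∑ y : Fin n → Bool, (∏ k, gB p α (y k)) * F y z) -
        ⨆ y : Fin n → Bool, (∏ k, gB p α (y k)) * F y z) := by
    rw [Finset.sum_sub_distrib, sum_GF h F hF, pcYZ_rw]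
  rw [e1, e2, Finset.mul_sum, Finset.mul_sum]
  exact Finset.sum_le_sum fun z _ => converse_per_z h n (fun y => F y z) (fun y => hF.1 y z)

-- ---------- the Z channel ----------

lemma Zch_nonneg {V : Type*} [DecidableEq V] (y0 z0 : V) (ζ : ℝ) (h0 : 0 ≤ ζ) (h1 : ζ ≤ 1) :
    ∀ y z, 0 ≤ Zch y0 z0 ζ y z := by
  intro y z; unfold Zch; split_ifs <;> linarith

lemma Zch_channel {V : Type*} [DecidableEq V] [Fintype V] (y0 z0 : V) (ζ : ℝ)
    (h0 : 0 ≤ ζ) (h1 : ζ ≤ 1) (hne : y0 ≠ z0) : IsChannel (Zch y0 z0 ζ) := by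
  refine ⟨Zch_nonneg y0 z0 ζ h0 h1, fun y => ?_⟩
  by_cases hy : y = y0
  · subst hy
    have key : ∀ z : V, Zch y z0 ζ y z =
        (if z = z0 then ζ else 0) + (if z = y then 1 - ζ else 0) := fun z => by
      by_cases h1' : z = z0
      · subst h1'; simp [Zch, Ne.symm hne]
      · by_cases h2' : z = y
        · subst h2'; simp [Zch, h1']
        · simp [Zch, h1', h2']
    rw [Finset.sum_congr rfl fun z _ => key z, Finset.sum_add_distrib]
    simp
  · have key : ∀ z : V, Zch y0 z0 ζ y z = if z = y then 1 else 0 := fun z => by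
      simp [Zch, hy]
    rw [Finset.sum_congr rfl fun z _ => key z]
    simp


-- ---------- evaluation helpers ----------

lemma fB_tt_ff : fB p α true false = p * α := by simp [fB, bern]
lemma fB_ff_ff : fB p α false false = (1 - p) * (1 - α) := by simp [fB, bern]
lemma fB_ff_tt : fB p α false true = (1 - p) * α := by simp [fB, bern]
lemma fB_tt_tt : fB p α true true = (1 - α) * p := by simp [fB, bern]; ring

lemma prod_const_fin {n : ℕ} (c : ℝ) : ∏ _k : Fin n, c = c ^ n := by
  rw [Finset.prod_const, Finset.card_univ, Fintype.card_fin]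

lemma G_ones {n : ℕ} :
    ∏ k : Fin n, gB p α ((fun _ => true) k) = (α * (1 - p) + (1 - α) * p) ^ n := by
  show ∏ _k : Fin n, gB p α true = _
  rw [show gB p α true = α * (1 - p) + (1 - α) * p from rfl, prod_const_fin]

lemma G_zeros {n : ℕ} :
    ∏ k : Fin n, gB p α ((fun _ => false) k) = (p * α + (1 - p) * (1 - α)) ^ n := by
  show ∏ _k : Fin n, gB p α false = _
  rw [show gB p α false = p * α + (1 - p) * (1 - α) from rfl, prod_const_fin]

lemma ones_ne_zeros {n : ℕ} (hn : 0 < n) :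
    (fun _ : Fin n => true) ≠ (fun _ : Fin n => false) := by
  intro hcon
  exact absurd (congrFun hcon ⟨0, hn⟩) (by simp)

-- Zch evaluation lemmas
section ZchEval
variable {W : Type*} [DecidableEq W] (y0 z0 : W) (ζ : ℝ)

lemma Zch_diag (hne : y0 ≠ z0) : Zch y0 z0 ζ y0 y0 = 1 - ζ := by
  unfold Zch; rw [if_pos rfl, if_neg hne, if_pos rfl]

lemma Zch_cross : Zch y0 z0 ζ y0 z0 = ζ := by
  unfold Zch; rw [if_pos rfl, if_pos rfl]

lemma Zch_y0_other {z : W} (hz0 : z ≠ z0) (hzy : z ≠ y0) : Zch y0 z0 ζ y0 z = 0 := by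
  unfold Zch; rw [if_pos rfl, if_neg hz0, if_neg hzy]

lemma Zch_other_self {y : W} (hy : y ≠ y0) : Zch y0 z0 ζ y y = 1 := by
  unfold Zch; rw [if_neg hy, if_pos rfl]

lemma Zch_other {y z : W} (hy : y ≠ y0) (hzy : z ≠ y) : Zch y0 z0 ζ y z = 0 := by
  unfold Zch; rw [if_neg hy, if_neg hzy]

end ZchEval

-- ---------- pcYZ of the Z channel ----------

lemma pcYZ_Zch (h : Hs p α) {n : ℕ} (hn : 0 < n) (ζ : ℝ) (h0 : 0 ≤ ζ) (h1 : ζ ≤ 1)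
    (h2 : ζ * (α * (1 - p) + (1 - α) * p) ^ n ≤ (p * α + (1 - p) * (1 - α)) ^ n) :
    pcYZ (jointIID n p α) (Zch (fun _ => true) (fun _ => false) ζ) =
      1 - ζ * (α * (1 - p) + (1 - α) * p) ^ n := by
  have hne := ones_ne_zeros (n := n) hn
  set o : Fin n → Bool := fun _ => true with ho
  set e : Fin n → Bool := fun _ => false with he
  rw [pcYZ_rw]
  have key : ∀ z : Fin n → Bool,
      (⨆ y : Fin n → Bool, (∏ k, gB p α (y k)) * Zch o e ζ y z) =
        (∏ k, gB p α (z k)) +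
          (if z = o then -(ζ * (α * (1 - p) + (1 - α) * p) ^ n) else 0) := by
    intro z
    by_cases hz1 : z = o
    · subst hz1
      have H : ∀ y : Fin n → Bool,
          (∏ k, gB p α (y k)) * Zch o e ζ y o ≤ (∏ k, gB p α (o k)) * Zch o e ζ o o := by
        intro y
        by_cases hy : y = o
        · subst hy; exact le_refl _
        · rw [Zch_other o e ζ hy (fun hc => hy hc.symm), mul_zero, Zch_diag o e ζ hne]
          exact mul_nonneg (G_nonneg h _) (by linarith)
      rw [ciSup_eq_max _ o H, Zch_diag o e ζ hne, if_pos rfl, G_ones]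
      ring
    · by_cases hz0 : z = e
      · subst hz0
        have H : ∀ y : Fin n → Bool,
            (∏ k, gB p α (y k)) * Zch o e ζ y e ≤ (∏ k, gB p α (e k)) * Zch o e ζ e e := by
          intro y
          by_cases hy : y = o
          · subst hy
            rw [Zch_cross o e ζ, Zch_other_self o e ζ (Ne.symm hne), mul_one, G_ones, G_zeros]
            calc (α * (1 - p) + (1 - α) * p) ^ n * ζ
                = ζ * (α * (1 - p) + (1 - α) * p) ^ n := by ring
              _ ≤ (p * α + (1 - p) * (1 - α)) ^ n := h2
          · by_cases hy0 : y = e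
            · subst hy0; exact le_refl _
            · rw [Zch_other o e ζ hy (fun hc => hy0 hc.symm), mul_zero,
                Zch_other_self o e ζ (Ne.symm hne), mul_one]
              exact G_nonneg h _
        rw [ciSup_eq_max _ e H, Zch_other_self o e ζ (Ne.symm hne), mul_one, if_neg hz1,
          add_zero]
      · have H : ∀ y : Fin n → Bool,
            (∏ k, gB p α (y k)) * Zch o e ζ y z ≤ (∏ k, gB p α (z k)) * Zch o e ζ z z := by
          intro y
          by_cases hy : y = o
          · subst hy
            rw [Zch_y0_other o e ζ hz0 hz1, mul_zero, Zch_other_self o e ζ hz1, mul_one]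
            exact G_nonneg h _
          · by_cases hyz : y = z
            · subst hyz; exact le_refl _
            · rw [Zch_other o e ζ hy (fun hc => hyz hc.symm), mul_zero,
                Zch_other_self o e ζ hz1, mul_one]
              exact G_nonneg h _
        rw [ciSup_eq_max _ z H, Zch_other_self o e ζ hz1, mul_one, if_neg hz1, add_zero]
  rw [Finset.sum_congr rfl fun z _ => key z, Finset.sum_add_distrib, sum_G h n]
  rw [Finset.sum_ite_eq' univ o (fun _ => -(ζ * (α * (1 - p) + (1 - α) * p) ^ n))]
  simp only [Finset.mem_univ, if_true]
  ring


-- ---------- joint evaluations ----------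

lemma joint_le_diag (h : Hs p α) {n : ℕ} (x y : Fin n → Bool) :
    jointIID n p α x y ≤ jointIID n p α y y := by
  rw [jointIID_eq, jointIID_eq]
  exact Finset.prod_le_prod (fun k _ => fB_nonneg h _ _) (fun k _ => fB_le_diag h _ _)

lemma joint_diag_ones {n : ℕ} :
    jointIID n p α (fun _ => true) (fun _ => true) = ((1 - α) * p) ^ n := by
  rw [jointIID_eq]
  show ∏ _k : Fin n, fB p α true true = _
  rw [fB_tt_tt, prod_const_fin]

lemma joint_diag_zeros {n : ℕ} :
    jointIID n p α (fun _ => false) (fun _ => false) = ((1 - p) * (1 - α)) ^ n := by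
  rw [jointIID_eq]
  show ∏ _k : Fin n, fB p α false false = _
  rw [fB_ff_ff, prod_const_fin]

lemma joint_zeros_ones {n : ℕ} :
    jointIID n p α (fun _ => false) (fun _ => true) = ((1 - p) * α) ^ n := by
  rw [jointIID_eq]
  show ∏ _k : Fin n, fB p α false true = _
  rw [fB_ff_tt, prod_const_fin]

lemma mx_ones {n : ℕ} : ∏ k : Fin n, mxB p α ((fun _ => true) k) = ((1 - α) * p) ^ n := by
  show ∏ _k : Fin n, mxB p α true = _
  rw [show mxB p α true = (1 - α) * p from rfl, prod_const_fin]

lemma mx_zeros {n : ℕ} : ∏ k : Fin n, mxB p α ((fun _ => false) k) = ((1 - p) * (1 - α)) ^ n := by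
  show ∏ _k : Fin n, mxB p α false = _
  rw [show mxB p α false = (1 - p) * (1 - α) from rfl, prod_const_fin]

-- ---------- pcXZ of the Z channel ----------

lemma pcXZ_Zch (h : Hs p α) {n : ℕ} (hn : 0 < n) (ζ : ℝ) (h0 : 0 ≤ ζ) (h1 : ζ ≤ 1)
    (hkey : p * α * ((1 - p) * (1 - α)) ^ (n - 1) + ζ * ((1 - α) * p) ^ n ≤
      ((1 - p) * (1 - α)) ^ n + ζ * ((1 - p) * α) ^ n) :
    pcXZ (jointIID n p α) (Zch (fun _ => true) (fun _ => false) ζ) =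
      (1 - α) ^ n - ζ * (((1 - α) * p) ^ n - ((1 - p) * α) ^ n) := by
  have hne := ones_ne_zeros (n := n) hn
  set o : Fin n → Bool := fun _ => true with ho
  set e : Fin n → Bool := fun _ => false with he
  have hinner : ∀ (x z : Fin n → Bool),
      ∑ y, jointIID n p α x y * Zch o e ζ y z =
        if z = o then (1 - ζ) * jointIID n p α x o
        else if z = e then jointIID n p α x e + ζ * jointIID n p α x o
        else jointIID n p α x z := by
    intro x z
    by_cases hz1 : z = o
    · subst hz1
      rw [if_pos rfl]
      rw [Fintype.sum_eq_single o (fun y hy => by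
        rw [Zch_other o e ζ hy (fun hc => hy hc.symm), mul_zero])]
      rw [Zch_diag o e ζ hne]; ring
    · by_cases hz0 : z = e
      · subst hz0
        rw [if_neg hz1, if_pos rfl]
        have ptw : ∀ y : Fin n → Bool, jointIID n p α x y * Zch o e ζ y e =
            (if y = o then ζ * jointIID n p α x y else 0) +
              (if y = e then jointIID n p α x y else 0) := by
          intro y
          by_cases hy : y = o
          · subst hy
            rw [Zch_cross o e ζ, if_pos rfl, if_neg hne]; ring
          · by_cases hy0 : y = e
            · subst hy0
              rw [Zch_other_self o e ζ (Ne.symm hne), if_neg hy, if_pos rfl]; ring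
            · rw [Zch_other o e ζ hy (fun hc => hy0 hc.symm), if_neg hy, if_neg hy0]; ring
        rw [Finset.sum_congr rfl fun y _ => ptw y, Finset.sum_add_distrib,
          Finset.sum_ite_eq' univ o (fun y => ζ * jointIID n p α x y),
          Finset.sum_ite_eq' univ e (fun y => jointIID n p α x y)]
        simp only [Finset.mem_univ, if_true]
        ring
      · rw [if_neg hz1, if_neg hz0]
        rw [Fintype.sum_eq_single z (fun y hy => by
          by_cases hyo : y = o
          · subst hyo; rw [Zch_y0_other o e ζ hz0 hz1, mul_zero]
          · rw [Zch_other o e ζ hyo (fun hc => hy hc.symm), mul_zero])]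
        rw [Zch_other_self o e ζ hz1, mul_one]
  simp only [pcXZ, hinner]
  have key : ∀ z : Fin n → Bool,
      (⨆ x : Fin n → Bool,
        if z = o then (1 - ζ) * jointIID n p α x o
        else if z = e then jointIID n p α x e + ζ * jointIID n p α x o
        else jointIID n p α x z) =
      (∏ k, mxB p α (z k)) + (if z = o then -(ζ * ((1 - α) * p) ^ n) else 0) +
        (if z = e then ζ * ((1 - p) * α) ^ n else 0) := by
    intro z
    by_cases hz1 : z = o
    · subst hz1
      simp only [eq_self_iff_true, if_true, hne, if_false]
      have H : ∀ x : Fin n → Bool,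
          (1 - ζ) * jointIID n p α x o ≤ (1 - ζ) * jointIID n p α o o :=
        fun x => mul_le_mul_of_nonneg_left (joint_le_diag h x o) (by linarith)
      rw [ciSup_eq_max _ o H, joint_diag_ones, mx_ones]
      ring
    · by_cases hz0 : z = e
      · subst hz0
        simp only [hz1, eq_self_iff_true, if_true, if_false]
        have H : ∀ x : Fin n → Bool,
            jointIID n p α x e + ζ * jointIID n p α x o ≤
              jointIID n p α e e + ζ * jointIID n p α e o := by
          intro x
          by_cases hx : x = e
          · subst hx; exact le_refl _
          · obtain ⟨k0, hk0⟩ := Function.ne_iff.mp hx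
            have hxk0 : x k0 = true := by
              revert hk0; cases hxk : x k0 <;> simp [he]
            have bound1 : jointIID n p α x e ≤ p * α * ((1 - p) * (1 - α)) ^ (n - 1) := by
              rw [jointIID_eq]
              have step1 : ∏ k, fB p α (x k) (e k) =
                  fB p α (x k0) (e k0) * ∏ k ∈ univ.erase k0, fB p α (x k) (e k) :=
                (Finset.mul_prod_erase univ _ (Finset.mem_univ k0)).symm
              rw [step1]
              have e1 : fB p α (x k0) (e k0) = p * α := by
                rw [hxk0]; exact fB_tt_ff
              have e2 : ∏ k ∈ univ.erase k0, fB p α (x k) (e k) ≤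
                  ((1 - p) * (1 - α)) ^ (n - 1) := by
                calc ∏ k ∈ univ.erase k0, fB p α (x k) (e k)
                    ≤ ∏ _k ∈ univ.erase k0, (1 - p) * (1 - α) := by
                      refine Finset.prod_le_prod (fun k _ => fB_nonneg h _ _) (fun k _ => ?_)
                      have := fB_le_diag h (x k) (e k)
                      rwa [show fB p α (e k) (e k) = (1 - p) * (1 - α) from fB_ff_ff] at this
                  _ = ((1 - p) * (1 - α)) ^ (n - 1) := by
                      rw [Finset.prod_const, Finset.card_erase_of_mem (Finset.mem_univ k0),
                        Finset.card_univ, Fintype.card_fin]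
              rw [e1]
              have hpa0 : (0:ℝ) ≤ p * α := by
                have := h.hp1; have := h.ha1; nlinarith
              exact mul_le_mul_of_nonneg_left e2 hpa0
            have bound2 : jointIID n p α x o ≤ ((1 - α) * p) ^ n := by
              have := joint_le_diag h x o
              rwa [show jointIID n p α o o = ((1 - α) * p) ^ n from joint_diag_ones] at this
            have b2' : ζ * jointIID n p α x o ≤ ζ * ((1 - α) * p) ^ n :=
              mul_le_mul_of_nonneg_left bound2 h0
            have ee : jointIID n p α e e = ((1 - p) * (1 - α)) ^ n := joint_diag_zeros
            have eo : jointIID n p α e o = ((1 - p) * α) ^ n := joint_zeros_ones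
            rw [ee, eo]
            linarith [bound1, b2', hkey]
        rw [ciSup_eq_max _ e H, joint_diag_zeros, joint_zeros_ones, mx_zeros]
        ring
      · simp only [hz1, hz0, if_false]
        have H : ∀ x : Fin n → Bool, jointIID n p α x z ≤ jointIID n p α z z :=
          fun x => joint_le_diag h x z
        rw [ciSup_eq_max _ z H, add_zero, add_zero]
        rw [jointIID_eq]
        exact Finset.prod_congr rfl fun k _ => fB_diag p α (z k)
  rw [Finset.sum_congr rfl fun z _ => key z, Finset.sum_add_distrib, Finset.sum_add_distrib,
    sum_mx n, Finset.sum_ite_eq' univ o (fun _ => -(ζ * ((1 - α) * p) ^ n)),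
    Finset.sum_ite_eq' univ e (fun _ => ζ * ((1 - p) * α) ^ n)]
  simp only [Finset.mem_univ, if_true]
  ring

end IIDAux

open IIDAux

/-- Theorem 4: i.i.d. case, high-utility regime. The supremum of
`P_c(Y^n|Z^n)` over channels `P_{Z^n|Y^n}` with output alphabet `{0,1}^n` satisfying
`P_c(X^n|Z^n) ≤ ε` equals `1 − ζ(ε) q^n` for `ε ∈ [ε_L, (1−α)^n]`, and is attained by
the `2^n`-ary Z-channel `Z_n(ζ(ε))`. -/
theorem iid_vector_high_utility (n : ℕ) (hn : 0 < n) (p α : ℝ)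
    (hp : p ∈ Set.Ico (1 / 2 : ℝ) 1) (hα : α ∈ Set.Ico (0 : ℝ) (1 / 2))
    (hpα : p < 1 - α) :
    ∃ εL < (1 - α) ^ n, ∀ ε ∈ Set.Icc εL ((1 - α) ^ n),
      (sSup {u | ∃ F : (Fin n → Bool) → (Fin n → Bool) → ℝ, IsChannel F ∧
          pcXZ (jointIID n p α) F ≤ ε ∧ u = pcYZ (jointIID n p α) F} =
        1 - ((1 - α) ^ n - ε) / (((1 - α) * p) ^ n - (α * (1 - p)) ^ n) *
          (α * (1 - p) + (1 - α) * p) ^ n) ∧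
      (let Z := Zch (fun _ : Fin n => true) (fun _ : Fin n => false)
          (((1 - α) ^ n - ε) / (((1 - α) * p) ^ n - (α * (1 - p)) ^ n))
       IsChannel Z ∧ pcXZ (jointIID n p α) Z ≤ ε ∧
       pcYZ (jointIID n p α) Z =
        1 - ((1 - α) ^ n - ε) / (((1 - α) * p) ^ n - (α * (1 - p)) ^ n) *
          (α * (1 - p) + (1 - α) * p) ^ n) := by
  obtain ⟨hp1, hp2⟩ := hp
  obtain ⟨ha1, ha2⟩ := hα
  have h : Hs p α := ⟨hp1, hp2, ha1, ha2, hpα⟩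
  -- numeric facts
  have hC'pos : (0:ℝ) < (1 - α) * p := by nlinarith
  have hBpos : (0:ℝ) < (1 - p) * (1 - α) := by nlinarith
  have hBA : p * α < (1 - p) * (1 - α) := by nlinarith
  have hBC' : (1 - p) * (1 - α) ≤ (1 - α) * p := by nlinarith
  have hD'nonneg : (0:ℝ) ≤ α * (1 - p) := by nlinarith
  have hD'C' : α * (1 - p) < (1 - α) * p := by nlinarith
  have hQpos : (0:ℝ) < α * (1 - p) + (1 - α) * p := by nlinarith
  have hABpos : (0:ℝ) < p * α + (1 - p) * (1 - α) := by nlinarith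
  have hΔpos : (0:ℝ) < ((1 - α) * p) ^ n - (α * (1 - p)) ^ n := by
    have := pow_lt_pow_left₀ hD'C' hD'nonneg hn.ne'
    linarith
  set Δ : ℝ := ((1 - α) * p) ^ n - (α * (1 - p)) ^ n with hΔdef
  -- the ζ threshold
  set ζ0 : ℝ := min (min 1
      ((((1 - p) * (1 - α)) ^ n * ((1 - p) * (1 - α) - p * α)) /
        (((1 - α) * p) ^ n * ((1 - α) * p))))
      ((p * α + (1 - p) * (1 - α)) ^ n / (α * (1 - p) + (1 - α) * p) ^ n) with hζ0def
  have hζ0pos : 0 < ζ0 := by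
    refine lt_min (lt_min one_pos (div_pos (mul_pos (pow_pos hBpos n) (by linarith))
      (mul_pos (pow_pos hC'pos n) hC'pos))) (div_pos (pow_pos hABpos n) (pow_pos hQpos n))
  refine ⟨(1 - α) ^ n - ζ0 * Δ, by nlinarith [mul_pos hζ0pos hΔpos], ?_⟩
  intro ε hε
  obtain ⟨hε1, hε2⟩ := hε
  set ζ : ℝ := ((1 - α) ^ n - ε) / Δ with hζdef
  have hζnonneg : 0 ≤ ζ := div_nonneg (by linarith) hΔpos.le
  have hζζ0 : ζ ≤ ζ0 := by
    rw [hζdef, div_le_iff₀ hΔpos]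
    nlinarith [hε1]
  have hζ1 : ζ ≤ 1 := hζζ0.trans ((min_le_left _ _).trans (min_le_left _ _))
  have hζΔ : ζ * Δ = (1 - α) ^ n - ε := div_mul_cancel₀ _ hΔpos.ne'
  -- hypothesis for pcYZ_Zch
  have h2 : ζ * (α * (1 - p) + (1 - α) * p) ^ n ≤ (p * α + (1 - p) * (1 - α)) ^ n := by
    have := hζζ0.trans (min_le_right _ _)
    rw [le_div_iff₀ (pow_pos hQpos n)] at this
    exact this
  -- hypothesis for pcXZ_Zch
  have hkey : p * α * ((1 - p) * (1 - α)) ^ (n - 1) + ζ * ((1 - α) * p) ^ n ≤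
      ((1 - p) * (1 - α)) ^ n + ζ * ((1 - p) * α) ^ n := by
    obtain ⟨m, rfl⟩ : ∃ m, n = m + 1 := ⟨n - 1, (Nat.succ_pred_eq_of_pos hn).symm⟩
    have hX := hζζ0.trans ((min_le_left _ _).trans (min_le_right _ _))
    rw [le_div_iff₀ (mul_pos (pow_pos hC'pos (m+1)) hC'pos)] at hX
    -- hX : ζ * (C'^(m+1) * C') ≤ B^(m+1) * (B - A)
    have hBm : (0:ℝ) ≤ ((1 - p) * (1 - α)) ^ m := (pow_pos hBpos m).le
    have step : ζ * ((1 - α) * p) ^ (m + 1) * ((1 - α) * p) ≤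
        (((1 - p) * (1 - α)) ^ m * ((1 - p) * (1 - α) - p * α)) * ((1 - α) * p) := by
      have e1 : ((1 - p) * (1 - α)) ^ (m + 1) * ((1 - p) * (1 - α) - p * α) =
          (((1 - p) * (1 - α)) ^ m * ((1 - p) * (1 - α) - p * α)) * ((1 - p) * (1 - α)) := by
        rw [pow_succ]; ring
      have e2 : (((1 - p) * (1 - α)) ^ m * ((1 - p) * (1 - α) - p * α)) * ((1 - p) * (1 - α)) ≤
          (((1 - p) * (1 - α)) ^ m * ((1 - p) * (1 - α) - p * α)) * ((1 - α) * p) :=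
        mul_le_mul_of_nonneg_left hBC' (mul_nonneg hBm (by linarith))
      calc ζ * ((1 - α) * p) ^ (m + 1) * ((1 - α) * p)
          = ζ * (((1 - α) * p) ^ (m + 1) * ((1 - α) * p)) := by ring
        _ ≤ ((1 - p) * (1 - α)) ^ (m + 1) * ((1 - p) * (1 - α) - p * α) := hX
        _ = (((1 - p) * (1 - α)) ^ m * ((1 - p) * (1 - α) - p * α)) * ((1 - p) * (1 - α)) := e1
        _ ≤ _ := e2
    have main : ζ * ((1 - α) * p) ^ (m + 1) ≤
        ((1 - p) * (1 - α)) ^ m * ((1 - p) * (1 - α) - p * α) :=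
      le_of_mul_le_mul_right (by linarith [step]) hC'pos
    have hz : (0:ℝ) ≤ ζ * ((1 - p) * α) ^ (m + 1) :=
      mul_nonneg hζnonneg (pow_nonneg (by nlinarith) _)
    have hred : (m + 1) - 1 = m := rfl
    have eC : ((1 - α) * p) ^ (m + 1) = ((1 - α) * p) ^ m * ((1 - α) * p) := pow_succ _ _
    have eB : ((1 - p) * (1 - α)) ^ (m + 1) = ((1 - p) * (1 - α)) ^ m * ((1 - p) * (1 - α)) :=
      pow_succ _ _
    rw [hred]
    have expand : ((1 - p) * (1 - α)) ^ m * ((1 - p) * (1 - α) - p * α) =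
        ((1 - p) * (1 - α)) ^ m * ((1 - p) * (1 - α)) - p * α * ((1 - p) * (1 - α)) ^ m := by
      ring
    linarith [main, hz, expand, eB]
  have hne := ones_ne_zeros (n := n) hn
  have hch : IsChannel (Zch (fun _ : Fin n => true) (fun _ : Fin n => false) ζ) :=
    Zch_channel _ _ ζ hζnonneg hζ1 hne
  have hswap : ((1 - p) * α) ^ n = (α * (1 - p)) ^ n := by rw [mul_comm]
  have hXZ : pcXZ (jointIID n p α) (Zch (fun _ : Fin n => true) (fun _ : Fin n => false) ζ) =
      ε := by
    rw [pcXZ_Zch h hn ζ hζnonneg hζ1 hkey, hswap]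
    rw [show ((1 - α) * p) ^ n - (α * (1 - p)) ^ n = Δ from rfl]
    linarith [hζΔ]
  have hYZ : pcYZ (jointIID n p α) (Zch (fun _ : Fin n => true) (fun _ : Fin n => false) ζ) =
      1 - ζ * (α * (1 - p) + (1 - α) * p) ^ n :=
    pcYZ_Zch h hn ζ hζnonneg hζ1 h2
  have hQn_nonneg : (0:ℝ) ≤ (α * (1 - p) + (1 - α) * p) ^ n := (pow_pos hQpos n).le
  constructor
  · -- sSup part
    apply IsGreatest.csSup_eq
    constructor
    · exact ⟨_, hch, le_of_eq hXZ, hYZ.symm⟩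
    · rintro u ⟨F, hF, hFle, rfl⟩
      have c1 := global_converse h n F hF
      have c2 : (α * (1 - p) + (1 - α) * p) ^ n * ((1 - α) ^ n - ε) ≤
          (α * (1 - p) + (1 - α) * p) ^ n * ((1 - α) ^ n - pcXZ (jointIID n p α) F) :=
        mul_le_mul_of_nonneg_left (by linarith) hQn_nonneg
      have hΔpos' : (0:ℝ) < ((1 - α) * p) ^ n - (α * (1 - p)) ^ n := by
        rw [← hΔdef]; exact hΔpos
      have er : (((1 - α) * p) ^ n - (α * (1 - p)) ^ n) *
            (ζ * (α * (1 - p) + (1 - α) * p) ^ n) =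
          (α * (1 - p) + (1 - α) * p) ^ n * (ζ * Δ) := by rw [hΔdef]; ring
      have er2 : (α * (1 - p) + (1 - α) * p) ^ n * (ζ * Δ) =
          (α * (1 - p) + (1 - α) * p) ^ n * ((1 - α) ^ n - ε) := by rw [hζΔ]
      have final : (((1 - α) * p) ^ n - (α * (1 - p)) ^ n) *
            (ζ * (α * (1 - p) + (1 - α) * p) ^ n) ≤
          (((1 - α) * p) ^ n - (α * (1 - p)) ^ n) * (1 - pcYZ (jointIID n p α) F) := by
        linarith [c1, c2, er, er2]
      have := (mul_le_mul_iff_right₀ hΔpos').mp final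
      linarith
  · exact ⟨hch, le_of_eq hXZ, hYZ⟩
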